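/- Let G be a graph with n vertices and x·n²/2 edges for some real x ∈ [0,1]. Then there exists a vertex v of G such that e(v) ≥ d(v)²/2 + (1−4x+3x²)n²/4 − (1−x)³n³/(4(n−d(v))). -/

import Mathlib

open Finset

/-- Double counting: summing a function over neighborhoods. -/
theorem aux_sum_nbr {V : Type*} [Fintype V] [DecidableEq V] (G : SimpleGraph V)
    [DecidableRel G.Adj] (f : V → ℕ) :
    ∑ v, ∑ a ∈ G.neighborFinset v, f a = ∑ a, G.degree a * f a := by
  have h1 : ∀ v, ∑ a ∈ G.neighborFinset v, f a = ∑ a, if G.Adj v a then f a else 0 := by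
    intro v
    rw [SimpleGraph.neighborFinset_eq_filter, Finset.sum_filter]
  simp_rw [h1]
  rw [Finset.sum_comm]
  refine Finset.sum_congr rfl fun a _ => ?_
  have h2 : ∀ v, (if G.Adj v a then f a else 0) = if v ∈ G.neighborFinset a then f a else 0 := by
    intro v
    simp [SimpleGraph.mem_neighborFinset, G.adj_comm]
  simp_rw [h2]
  rw [Finset.sum_ite_mem, Finset.univ_inter, Finset.sum_const, smul_eq_mul]
  rfl

/-- Corollary of Goodman's inequality: a graph `G` with `n ≥ 1` vertices and `x·n²/2` edges
(with all degrees `< n`) has a vertex `v` with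
`e(v) ≥ d(v)²/2 + (1−4x+3x²)n²/4 − (1−x)³n³/(4(n−d(v)))`,
where `d(v)` is the degree of `v` and `e(v)` the number of edges inside its neighborhood. -/
theorem stmt2 {V : Type*} [Fintype V] (G : SimpleGraph V) (n : ℕ) (x : ℝ)
    (hn : n = Fintype.card V) (hn1 : 1 ≤ n) (hx0 : 0 ≤ x) (hx1 : x ≤ 1)
    (hE : (G.edgeSet.ncard : ℝ) = x * n ^ 2 / 2)
    (hdeg : ∀ v : V, (G.neighborSet v).ncard < n) :
    ∃ v : V,
      ((G.induce (G.neighborSet v)).edgeSet.ncard : ℝ) ≥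
        ((G.neighborSet v).ncard : ℝ) ^ 2 / 2 + (1 - 4 * x + 3 * x ^ 2) * n ^ 2 / 4 -
          (1 - x) ^ 3 * n ^ 3 / (4 * ((n : ℝ) - ((G.neighborSet v).ncard : ℝ))) := by
  classical
  haveI hne : Nonempty V := by
    rw [← Fintype.card_pos_iff, ← hn]; omega
  set d : V → ℕ := fun v => G.degree v with hd_def
  set e : V → ℕ := fun v => ((G.induce (G.neighborSet v)).edgeSet).ncard with he_def
  have hncard : ∀ v, (G.neighborSet v).ncard = d v := by
    intro v
    rw [Set.ncard_eq_toFinset_card', ← SimpleGraph.neighborFinset_def]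
    rfl
  -- `2 e(v) = ∑_{a ∈ N(v)} |N(a) ∩ N(v)|`
  have he : ∀ v, 2 * e v =
      ∑ a ∈ G.neighborFinset v, (G.neighborFinset a ∩ G.neighborFinset v).card := by
    intro v
    have h1 : e v = (G.induce (G.neighborSet v)).edgeFinset.card := by
      rw [he_def]
      simp [SimpleGraph.edgeFinset, Set.ncard_eq_toFinset_card']
    have h2 := SimpleGraph.sum_degrees_eq_twice_card_edges (G.induce (G.neighborSet v))
    have h3 : ∀ a : G.neighborSet v, (G.induce (G.neighborSet v)).degree a =
        (G.neighborFinset ↑a ∩ G.neighborFinset v).card := by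
      intro a
      rw [← SimpleGraph.card_neighborSet_eq_degree]
      have eqv : ((G.induce (G.neighborSet v)).neighborSet a) ≃
          ↥(G.neighborSet ↑a ∩ G.neighborSet v) := by
        refine ⟨fun b => ⟨↑↑b, ?_, ?_⟩, fun w => ⟨⟨↑w, w.2.2⟩, ?_⟩,
          fun b => by simp, fun w => by simp⟩
        · have hb := b.2
          simp only [SimpleGraph.mem_neighborSet, SimpleGraph.comap_adj,
            Function.Embedding.coe_subtype] at hb
          exact hb
        · exact (↑b : G.neighborSet v).2
        · have hw := w.2.1
          simp only [SimpleGraph.mem_neighborSet, SimpleGraph.comap_adj,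
            Function.Embedding.coe_subtype]
          exact hw
      rw [Fintype.card_congr eqv, ← Set.toFinset_card]
      congr 1
      ext b
      simp [SimpleGraph.mem_neighborFinset, SimpleGraph.mem_neighborSet]
    calc 2 * e v = ∑ a : G.neighborSet v, (G.induce (G.neighborSet v)).degree a := by
          rw [h1, h2]
      _ = ∑ a : G.neighborSet v, (G.neighborFinset ↑a ∩ G.neighborFinset v).card :=
          Finset.sum_congr rfl fun a _ => h3 a
      _ = ∑ a ∈ G.neighborFinset v, (G.neighborFinset a ∩ G.neighborFinset v).card :=
          (Finset.sum_subtype (G.neighborFinset v)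
            (fun a => by simp [SimpleGraph.mem_neighborFinset, SimpleGraph.mem_neighborSet])
            (fun a => (G.neighborFinset a ∩ G.neighborFinset v).card)).symm
  -- key Goodman-type inequality in ℕ
  have key : 2 * ∑ v, d v * d v ≤ 2 * ∑ v, e v + n * ∑ v, d v := by
    have hpt : ∀ v, ∀ a ∈ G.neighborFinset v,
        d a + d v ≤ (G.neighborFinset a ∩ G.neighborFinset v).card + n := by
      intro v a _
      have h1 := Finset.card_inter_add_card_union (G.neighborFinset a) (G.neighborFinset v)
      have h2 : (G.neighborFinset a ∪ G.neighborFinset v).card ≤ n := by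
        rw [hn, ← Finset.card_univ]
        exact Finset.card_le_card (Finset.subset_univ _)
      have hda : d a = (G.neighborFinset a).card := rfl
      have hdv : d v = (G.neighborFinset v).card := rfl
      omega
    have step1 : ∑ v, ∑ a ∈ G.neighborFinset v, (d a + d v) = 2 * ∑ v, d v * d v := by
      have : ∀ v, ∑ a ∈ G.neighborFinset v, (d a + d v)
          = (∑ a ∈ G.neighborFinset v, d a) + d v * d v := by
        intro v
        rw [Finset.sum_add_distrib, Finset.sum_const, smul_eq_mul]
        rfl
      simp_rw [this]
      rw [Finset.sum_add_distrib, aux_sum_nbr]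
      ring
    have step2 : ∑ v, ∑ a ∈ G.neighborFinset v,
        ((G.neighborFinset a ∩ G.neighborFinset v).card + n)
        = 2 * ∑ v, e v + n * ∑ v, d v := by
      have : ∀ v, ∑ a ∈ G.neighborFinset v,
          ((G.neighborFinset a ∩ G.neighborFinset v).card + n) = 2 * e v + d v * n := by
        intro v
        rw [Finset.sum_add_distrib, Finset.sum_const, smul_eq_mul, ← he v]
        rfl
      simp_rw [this]
      rw [Finset.sum_add_distrib, Finset.mul_sum, Finset.mul_sum]
      congr 1
      exact Finset.sum_congr rfl fun v _ => mul_comm _ _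
    calc 2 * ∑ v, d v * d v = ∑ v, ∑ a ∈ G.neighborFinset v, (d a + d v) := step1.symm
      _ ≤ ∑ v, ∑ a ∈ G.neighborFinset v,
            ((G.neighborFinset a ∩ G.neighborFinset v).card + n) :=
          Finset.sum_le_sum fun v _ => Finset.sum_le_sum (hpt v)
      _ = 2 * ∑ v, e v + n * ∑ v, d v := step2
  -- handshake
  have hhs : ∑ v, d v = 2 * G.edgeFinset.card := SimpleGraph.sum_degrees_eq_twice_card_edges G
  have hEcard : (G.edgeFinset.card : ℝ) = x * n ^ 2 / 2 := by
    rw [← hE, SimpleGraph.edgeFinset, Set.ncard_eq_toFinset_card']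
  -- real quantities
  have hN0 : (0:ℝ) < n := by positivity
  have hsumd : ∑ v, (d v : ℝ) = x * n ^ 2 := by
    have := congrArg (fun m : ℕ => (m : ℝ)) hhs
    push_cast at this
    rw [this, hEcard]; ring
  have hdlt : ∀ v, (d v : ℝ) ≤ (n : ℝ) - 1 := by
    intro v
    have h := hdeg v
    rw [hncard v] at h
    have h2 : (↑(d v) : ℝ) + 1 ≤ (n : ℝ) := by exact_mod_cast Nat.succ_le_of_lt h
    linarith
  have hcardV : (Finset.univ : Finset V).card = n := by rw [Finset.card_univ, hn]
  set S : ℝ := ∑ v, (d v : ℝ) ^ 2 with hS_def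
  have hCS : (x * n ^ 2) ^ 2 ≤ n * S := by
    have := sq_sum_le_card_mul_sum_sq (s := (Finset.univ : Finset V))
      (f := fun v => (d v : ℝ))
    rw [hcardV, hsumd] at this
    exact this
  have hS : x ^ 2 * (n:ℝ) ^ 3 ≤ S := by
    have h : (n:ℝ) * (x ^ 2 * n ^ 3) = (x * n ^ 2) ^ 2 := by ring
    exact le_of_mul_le_mul_left (by linarith [hCS]) hN0
  -- x < 1
  have hsub : ∑ v, ((n : ℝ) - d v) = (1 - x) * n ^ 2 := by
    rw [Finset.sum_sub_distrib, Finset.sum_const, hcardV, hsumd, nsmul_eq_mul]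
    ring
  have hx1' : x < 1 := by
    have hle : ∑ v, ((n : ℝ) - d v) ≥ ∑ v, (1:ℝ) :=
      Finset.sum_le_sum fun v _ => by linarith [hdlt v]
    rw [hsub, Finset.sum_const, hcardV, nsmul_eq_mul, mul_one] at hle
    nlinarith
  -- harmonic mean bound
  have h1x : (0:ℝ) < 1 - x := by linarith
  have h1xne : (1:ℝ) - x ≠ 0 := ne_of_gt h1x
  have hnne : (n:ℝ) ≠ 0 := ne_of_gt hN0
  set m : ℝ := (1 - x) * n with hm_def
  have hm0 : 0 < m := mul_pos h1x hN0
  have hH : 1 / (1 - x) ≤ ∑ v, 1 / ((n:ℝ) - d v) := by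
    have hpt : ∀ v, 2 / m - ((n:ℝ) - d v) / m ^ 2 ≤ 1 / ((n:ℝ) - d v) := by
      intro v
      have ht : (0:ℝ) < (n:ℝ) - d v := by linarith [hdlt v]
      rw [div_sub_div _ _ (ne_of_gt hm0) (by positivity), div_le_div_iff₀ (by positivity) ht]
      nlinarith [sq_nonneg (((n:ℝ) - d v) - m)]
    have hsum := Finset.sum_le_sum fun v (_ : v ∈ Finset.univ) => hpt v
    have heq : ∑ v, (2 / m - ((n:ℝ) - d v) / m ^ 2) = 1 / (1 - x) := by
      rw [Finset.sum_sub_distrib, Finset.sum_const, hcardV, nsmul_eq_mul]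
      rw [← Finset.sum_div, hsub, hm_def]
      field_simp
      ring
    linarith [hsum, heq.symm.le]
  -- key inequality in ℝ
  have keyR : S * 2 ≤ 2 * ∑ v, (e v : ℝ) + (n:ℝ) * (x * n ^ 2) := by
    have := congrArg (fun m : ℕ => (m : ℝ)) (rfl : 2 * ∑ v, d v * d v = 2 * ∑ v, d v * d v)
    have hc : ((2 * ∑ v, d v * d v : ℕ) : ℝ) ≤ ((2 * ∑ v, e v + n * ∑ v, d v : ℕ) : ℝ) :=
      Nat.cast_le.2 key
    push_cast at hc
    have h1 : ∑ v, (d v:ℝ) * d v = S := by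
      rw [hS_def]; exact Finset.sum_congr rfl fun v _ => (sq ((d v:ℝ))).symm
    rw [h1, hsumd] at hc
    linarith
  -- sum of RHS ≤ sum of e
  set R : V → ℝ := fun v => (d v : ℝ) ^ 2 / 2 + (1 - 4 * x + 3 * x ^ 2) * n ^ 2 / 4 -
      (1 - x) ^ 3 * n ^ 3 / (4 * ((n : ℝ) - d v)) with hR_def
  have hsumR : ∑ v, R v ≤ ∑ v, (e v : ℝ) := by
    have hKnn : (0:ℝ) ≤ (1 - x) ^ 3 * n ^ 3 := by
      have : (0:ℝ) ≤ (1 - x) := by linarith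
      positivity
    have hsplit : ∑ v, R v = S / 2 + (n:ℝ) * ((1 - 4 * x + 3 * x ^ 2) * n ^ 2 / 4)
        - (1 - x) ^ 3 * n ^ 3 / 4 * ∑ v, 1 / ((n:ℝ) - d v) := by
      rw [hR_def]
      rw [Finset.sum_sub_distrib, Finset.sum_add_distrib, Finset.sum_const, hcardV,
        nsmul_eq_mul, ← Finset.sum_div, Finset.mul_sum]
      congr 1
      refine Finset.sum_congr rfl fun v _ => ?_
      rw [div_mul_eq_mul_div, mul_one_div]
      rw [div_div]
      ring_nf
    have hHterm : (1 - x) ^ 2 * (n:ℝ) ^ 3 / 4 ≤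
        (1 - x) ^ 3 * n ^ 3 / 4 * ∑ v, 1 / ((n:ℝ) - d v) := by
      have h1 : (1 - x) ^ 3 * (n:ℝ) ^ 3 / 4 * (1 / (1 - x)) = (1 - x) ^ 2 * n ^ 3 / 4 := by
        field_simp
      calc (1 - x) ^ 2 * (n:ℝ) ^ 3 / 4 = (1 - x) ^ 3 * n ^ 3 / 4 * (1 / (1 - x)) := h1.symm
        _ ≤ (1 - x) ^ 3 * n ^ 3 / 4 * ∑ v, 1 / ((n:ℝ) - d v) :=
            mul_le_mul_of_nonneg_left hH (by positivity)
    rw [hsplit]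
    linarith [keyR, hS, hHterm]
  obtain ⟨v, -, hv⟩ := Finset.exists_le_of_sum_le Finset.univ_nonempty hsumR
  refine ⟨v, ?_⟩
  have h1 : ((G.induce (G.neighborSet v)).edgeSet.ncard : ℝ) = (e v : ℝ) := rfl
  have h2 : ((G.neighborSet v).ncard : ℝ) = (d v : ℝ) := by rw [hncard v]
  rw [h1, h2]
  exact hv
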